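/- arXiv:1403.3931 — 3 statements merged into one kernel-verified Lean document; each statement's English description precedes it below -/
import Mathlib

section
/- Let 0 < ε < 1/2 and let ω = ω(ε) be the unique positive solution of tanh ω = 2εω. Then there exists a constant C > 0 (independent of ε) such that |ω − 1/(2ε) + (1/ε)·e^{−1/ε}| ≤ (C/ε²)·e^{−2/ε} for all sufficiently small ε > 0. -/
open Real

lemma cubic_le_exp {x : ℝ} (hx : 0 ≤ x) : 1 + x + x^2/2 + x^3/6 ≤ Real.exp x := by
  have h := Real.sum_le_exp_of_nonneg hx 4
  simp [Finset.sum_range_succ, Nat.factorial] at h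
  linarith

lemma key {ε ω : ℝ} (hε : 0 < ε) (h : Real.tanh ω = 2 * ε * ω) :
    (1/(2*ε) - ω) * Real.exp (2*ω) = 1/(2*ε) + ω := by
  have hc : 0 < Real.cosh ω := Real.cosh_pos ω
  rw [Real.tanh_eq_sinh_div_cosh, div_eq_iff (ne_of_gt hc)] at h
  rw [Real.sinh_eq, Real.cosh_eq] at h
  have he : Real.exp ω * Real.exp (-ω) = 1 := by
    rw [← Real.exp_add]; simp
  have h2 : Real.exp (2*ω) = Real.exp ω * Real.exp ω := by
    rw [← Real.exp_add]; ring_nf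
  have hεne : (ε:ℝ) ≠ 0 := ne_of_gt hε
  have hp := Real.exp_pos ω
  field_simp at h ⊢
  rw [show ω * 2 = 2 * ω by ring, h2]
  linear_combination Real.exp ω * h + (1 + 2 * ω * ε) * he

lemma lower {a ω : ℝ} (ha : 2 ≤ a) (hω : 0 < ω)
    (hkey : (a - ω) * Real.exp (2*ω) = a + ω) : a - 1/2 < ω := by
  by_contra hc
  push_neg at hc
  have hω2 : ω ≤ a - 1/2 := hc
  have hcub := cubic_le_exp (x := 2*ω) (by linarith)
  have hpos : (0:ℝ) < a - ω := by linarith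
  have h1 : (a - ω) * (1 + 2*ω + (2*ω)^2/2 + (2*ω)^3/6) ≤ a + ω := by
    calc (a - ω) * (1 + 2*ω + (2*ω)^2/2 + (2*ω)^3/6)
        ≤ (a - ω) * Real.exp (2*ω) := by
          apply mul_le_mul_of_nonneg_left hcub (le_of_lt hpos)
      _ = a + ω := hkey
  nlinarith [mul_pos hω hω, mul_pos (mul_pos hω hω) hω, sq_nonneg (ω - 1), sq_nonneg ω,
    mul_nonneg (mul_nonneg hω.le hω.le) (sub_nonneg.2 hω2)]

lemma final {a δ u w : ℝ} (ha : 2 ≤ a) (hδpos : 0 < δ)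
    (hu : 0 < u) (hw1 : 1 ≤ w) (hw3 : w ≤ 3) (hwm : w - 1 ≤ 2*δ*w)
    (hδeq : δ = (2*a - δ) * (u*w)) : |2*a*u - δ| ≤ 1600*a^2*(u*u) := by
  have hwpos : (0:ℝ) < w := by linarith
  have huw : 0 < u * w := mul_pos hu hwpos
  have h2aδ : 0 < 2*a - δ := by nlinarith [huw]
  have hδ6 : δ ≤ 6*a*u := by
    have h1 : (2*a - δ) * (u*w) ≤ 2*a*(u*w) := by nlinarith [huw]
    have h2 : 2*a*(u*w) ≤ 2*a*(u*3) := by nlinarith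
    linarith [hδeq ▸ le_trans h1 h2]
  rw [abs_le]
  constructor
  · have h3 : (2*a - δ)*w - 2*a ≤ 12*a*δ := by
      nlinarith [mul_nonneg hδpos.le hwpos.le,
        mul_le_mul_of_nonneg_left hwm (by linarith : (0:ℝ) ≤ 2*a),
        mul_nonneg (mul_nonneg (by linarith : (0:ℝ) ≤ 4*a) hδpos.le)
          (by linarith : (0:ℝ) ≤ 3 - w)]
    have h4 : δ - 2*a*u = u * ((2*a - δ)*w - 2*a) := by linear_combination hδeq
    have h5 : u * ((2*a - δ)*w - 2*a) ≤ u * (12*a*δ) :=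
      mul_le_mul_of_nonneg_left h3 hu.le
    have h6 : u * (12*a*δ) ≤ u * (12*a*(6*a*u)) := by
      apply mul_le_mul_of_nonneg_left _ hu.le
      nlinarith
    nlinarith [mul_nonneg (mul_nonneg (mul_pos hu hu).le (by linarith : (0:ℝ) ≤ a))
      (by linarith : (0:ℝ) ≤ a)]
  · have h2 : 2*a - (2*a - δ)*w ≤ δ := by
      nlinarith [mul_nonneg h2aδ.le (by linarith : (0:ℝ) ≤ w - 1)]
    have h4 : 2*a*u - δ = u * (2*a - (2*a - δ)*w) := by linear_combination -hδeq
    have h5 : u * (2*a - (2*a - δ)*w) ≤ u * δ := mul_le_mul_of_nonneg_left h2 hu.le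
    have h6 : u * δ ≤ u * (6*a*u) := mul_le_mul_of_nonneg_left hδ6 hu.le
    nlinarith [mul_nonneg (mul_nonneg (mul_pos hu hu).le (by linarith : (0:ℝ) ≤ a))
      (by linarith : (0:ℝ) ≤ 1600*a - 6)]

theorem stmt_6 :
    ∃ C > (0:ℝ), ∃ ε₀ > (0:ℝ), ∀ ε : ℝ, 0 < ε → ε < 1 / 2 → ε < ε₀ →
      ∀ ω : ℝ, 0 < ω → Real.tanh ω = 2 * ε * ω →
        |ω - 1 / (2 * ε) + (1 / ε) * Real.exp (-1 / ε)| ≤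
          C / ε ^ 2 * Real.exp (-2 / ε) := by
  refine ⟨400, by norm_num, 1/4, by norm_num, ?_⟩
  intro ε hε hε2 hε0 ω hω htanh
  obtain ⟨a, ha_def⟩ : ∃ a : ℝ, a = 1/(2*ε) := ⟨_, rfl⟩
  have hεne : ε ≠ 0 := ne_of_gt hε
  have ha2 : 2 ≤ a := by
    rw [ha_def, le_div_iff₀ (by linarith)]; linarith
  have hkey : (a - ω) * Real.exp (2*ω) = a + ω := by rw [ha_def]; exact key hε htanh
  have hlow : a - 1/2 < ω := lower ha2 hω hkey
  have hωa : ω < a := by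
    by_contra hc
    push_neg at hc
    nlinarith [Real.exp_pos (2*ω)]
  obtain ⟨u, hu_def⟩ : ∃ u : ℝ, u = Real.exp (-1/ε) := ⟨_, rfl⟩
  obtain ⟨w, hw_def⟩ : ∃ w : ℝ, w = Real.exp (2*(a-ω)) := ⟨_, rfl⟩
  have hu : 0 < u := hu_def ▸ Real.exp_pos _
  have hεa : 1/ε = 2*a := by rw [ha_def]; field_simp
  have hv : Real.exp (-(2*ω)) = u * w := by
    rw [hu_def, hw_def, ← Real.exp_add]
    congr 1
    rw [ha_def]; field_simp; ring
  have hexpinv : Real.exp (2*ω) * Real.exp (-(2*ω)) = 1 := by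
    rw [← Real.exp_add]; simp
  have hδeq : a - ω = (2*a - (a-ω)) * (u*w) := by
    linear_combination Real.exp (-(2*ω)) * hkey - (a-ω) * hexpinv + (a+ω) * hv
  have hw1 : 1 ≤ w := hw_def ▸ Real.one_le_exp (by linarith)
  have hw3 : w ≤ 3 := by
    rw [hw_def]
    calc Real.exp (2*(a-ω)) ≤ Real.exp 1 := Real.exp_le_exp.2 (by linarith)
      _ ≤ 3 := by linarith [Real.exp_one_lt_d9]
  have hwm : w - 1 ≤ 2*(a-ω)*w := by
    have h1 : 1 - 2*(a-ω) ≤ Real.exp (-(2*(a-ω))) := by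
      linarith [Real.add_one_le_exp (-(2*(a-ω)))]
    have h2 : Real.exp (2*(a-ω)) * Real.exp (-(2*(a-ω))) = 1 := by
      rw [← Real.exp_add]; simp
    rw [hw_def]
    nlinarith [Real.exp_pos (-(2*(a-ω))), Real.exp_pos (2*(a-ω))]
  have hfin := final ha2 (by linarith : (0:ℝ) < a - ω) hu hw1 hw3 hwm hδeq
  have hgoal1 : ω - 1/(2*ε) + (1/ε) * Real.exp (-1/ε) = 2*a*u - (a - ω) := by
    rw [hεa, ← hu_def, ← ha_def]; ring
  have hgoal2 : (400:ℝ)/ε^2 * Real.exp (-2/ε) = 1600*a^2*(u*u) := by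
    have h1 : Real.exp (-2/ε) = u*u := by
      rw [hu_def, ← Real.exp_add]; congr 1; ring
    rw [h1, ha_def]
    field_simp
    ring
  rw [show ω - 1 / (2 * ε) + 1 / ε * Real.exp (-1 / ε) = 2*a*u - (a - ω) from hgoal1, hgoal2]
  exact hfin
end

section
/- Fix 0 < ε < 1/2 and let ω = ω(ε) > 0 solve tanh ω = 2εω. Define A⁰ = [ (1 − e^{−4ω})/(2ω) − 2e^{−2ω} ]^{−1} (1 − e^{−2ω})² (ω + 1/(2ε))^{−1} e^{ω − 1/(2ε)}. Then there exists a constant C̃ > 0 such that |A⁰ − 1| ≤ (C̃/ε) e^{−1/ε} for all sufficiently small ε. -/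
set_option maxHeartbeats 1000000

private lemma aux_omega_lb (ε ω q : ℝ) (hε : 0 < ε) (hω : 0 < ω) (hq0 : 0 < q)
    (hqbnd : q * (1 + 2*ω) ≤ 1) (heq : 2 * ε * ω * (1 + q) = 1 - q) :
    1 ≤ 2*ε + 4*ε*ω := by
  have hq_ge : 1 - 4*ε*ω ≤ q := by
    nlinarith [heq, hq0, hqbnd, mul_pos hω hq0, mul_pos hε hω]
  nlinarith [mul_le_mul_of_nonneg_right hq_ge (by linarith : (0:ℝ) ≤ 1+2*ω),
    hqbnd, hω, hε]

private lemma aux_qbnd (ω q : ℝ) (hq0 : 0 < q) (h1 : (2*ω) + 1 ≤ Real.exp (2*ω))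
    (h2 : q * Real.exp (2*ω) = 1) : q * (1 + 2*ω) ≤ 1 := by
  nlinarith [hq0]

private lemma aux_exp_small (ε : ℝ) (hε : 0 < ε) :
    Real.exp (-(1/(2*ε))) ≤ 16 * ε^2 := by
  set P : ℝ := Real.exp (1/(4*ε)) with hPdef
  have h4 : 1/(4*ε) ≤ P := by
    have := Real.add_one_le_exp (1/(4*ε)); linarith
  have h4' : 1 ≤ P * (4*ε) := (div_le_iff₀ (by positivity)).1 h4
  have hPP : Real.exp (-(1/(2*ε))) * (P*P) = 1 := by
    rw [hPdef, ← Real.exp_add, ← Real.exp_add]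
    have hz : -(1/(2*ε)) + (1/(4*ε) + 1/(4*ε)) = 0 := by field_simp; ring
    rw [hz, Real.exp_zero]
  have h8 : 1 ≤ 16*ε^2*(P*P) := by nlinarith [h4', hε]
  nlinarith [hPP, h8, Real.exp_pos (-(1/(2*ε)))]

private lemma aux_qeps (ε q : ℝ) (hε : 0 < ε) (hε4 : ε ≤ 1/10000)
    (hqsmall : q ≤ 48*ε^2) : q ≤ ε/100 := by
  nlinarith [hqsmall, hε]

private lemma aux_2omega (ε ω q : ℝ) (hq0 : 0 < q)
    (heq : 2 * ε * ω * (1 + q) = 1 - q) : 1 - 2*q ≤ 2*ω*ε := by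
  nlinarith [heq, hq0, mul_pos hq0 hq0]

private lemma aux_qleu (ε q u : ℝ) (hu0 : 0 < u) (hε4 : ε ≤ 1/10000)
    (hqu : q = u*ε) : q ≤ u/10000 := by
  nlinarith [hu0, hε4, hqu]

private lemma aux_upper (q u E : ℝ) (hq0 : 0 < q) (hq1 : q < 1) (hu0 : 0 < u)
    (hu100 : u ≤ 1/100) (hE1 : E ≤ 1) (hEpos : 0 < E) :
    (1-q)^2*(1+q)*E ≤ (1 + 8*u)*((1+q)^2 - 2*u) := by
  have hA0 : (0:ℝ) ≤ (1-q)^2*(1+q) := by positivity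
  have hA : (1-q)^2*(1+q) ≤ 1 := by nlinarith [mul_nonneg hq0.le hq0.le, sq_nonneg q]
  have hN1 : (1-q)^2*(1+q)*E ≤ 1 := by
    calc (1-q)^2*(1+q)*E ≤ (1-q)^2*(1+q)*1 := mul_le_mul_of_nonneg_left hE1 hA0
    _ ≤ 1 := by linarith
  nlinarith [hN1, mul_nonneg hu0.le (by linarith : (0:ℝ) ≤ 1/100 - u),
    mul_nonneg hu0.le hq0.le, mul_nonneg (mul_nonneg hu0.le hq0.le) hq0.le, sq_nonneg q]

private lemma aux_lower (q u E : ℝ) (hq0 : 0 < q) (hq1 : q < 1) (hu0 : 0 < u)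
    (hu100 : u ≤ 1/100) (hqleu : q ≤ u/10000) (hE2 : 1 - u ≤ E) :
    (1 - 8*u)*((1+q)^2 - 2*u) ≤ (1-q)^2*(1+q)*E := by
  have hstep : (1-q)^2*(1+q)*(1-u) ≤ (1-q)^2*(1+q)*E :=
    mul_le_mul_of_nonneg_left hE2 (by positivity)
  have hA : q^2 ≤ q := by nlinarith [mul_nonneg hq0.le (by linarith : (0:ℝ) ≤ 1 - q)]
  have hB : q^3 ≤ q := by
    nlinarith [mul_nonneg (mul_nonneg hq0.le (by linarith : (0:ℝ) ≤ 1 - q))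
      (by linarith : (0:ℝ) ≤ 1 + q)]
  have hC : u*q^3 ≤ q := by
    nlinarith [mul_nonneg (pow_nonneg hq0.le 3) (by linarith : (0:ℝ) ≤ 1 - u)]
  have hD : u^2 ≤ u/100 := by
    nlinarith [mul_nonneg hu0.le (by linarith : (0:ℝ) ≤ 1/100 - u)]
  nlinarith [hstep, hA, hB, hC, hD, mul_nonneg hu0.le hq0.le,
    mul_nonneg hu0.le (sq_nonneg q), hqleu, hu0.le, hq0.le]

set_option maxHeartbeats 1000000 in
theorem stmt_13 :
    ∃ C > (0:ℝ), ∃ ε₀ > (0:ℝ), ∀ ε : ℝ, 0 < ε → ε < 1 / 2 → ε < ε₀ →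
      ∀ ω : ℝ, 0 < ω → Real.tanh ω = 2 * ε * ω →
        |((1 - Real.exp (-(4 * ω))) / (2 * ω) - 2 * Real.exp (-(2 * ω)))⁻¹ *
            (1 - Real.exp (-(2 * ω))) ^ 2 * (ω + 1 / (2 * ε))⁻¹ *
            Real.exp (ω - 1 / (2 * ε)) - 1| ≤
          C / ε * Real.exp (-1 / ε) := by
  refine ⟨100, by norm_num, 1/10000, by norm_num, ?_⟩
  intro ε hε hε2 hε0 ω hω htanh
  have hεne : ε ≠ 0 := ne_of_gt hε
  set q : ℝ := Real.exp (-(2 * ω)) with hqdef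
  have hq0 : 0 < q := Real.exp_pos _
  have hq1 : q < 1 := by
    rw [hqdef]
    have h : -(2*ω) < 0 := by linarith
    calc Real.exp (-(2*ω)) < Real.exp 0 := Real.exp_lt_exp.2 h
    _ = 1 := Real.exp_zero
  have h1q : (0:ℝ) < 1 + q := by linarith
  have h1q' : (0:ℝ) < 1 - q := by linarith
  -- tanh in terms of q
  have hexpmul : Real.exp ω * q = Real.exp (-ω) := by
    rw [hqdef, ← Real.exp_add]; ring_nf
  have htq : Real.tanh ω = (1 - q) / (1 + q) := by
    rw [Real.tanh_eq_sinh_div_cosh, Real.sinh_eq, Real.cosh_eq]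
    have hd : (0:ℝ) < (Real.exp ω + Real.exp (-ω))/2 := by positivity
    rw [div_eq_div_iff (ne_of_gt hd) (ne_of_gt h1q)]
    linear_combination hexpmul
  -- key equation
  have heq : 2 * ε * ω * (1 + q) = 1 - q := by
    rw [htanh] at htq
    rw [eq_div_iff (ne_of_gt h1q)] at htq
    linarith
  -- lower bound on ω : 1/(2ε) ≤ 1 + 2ω
  have hqbnd : q * (1 + 2*ω) ≤ 1 := by
    refine aux_qbnd ω q hq0 (Real.add_one_le_exp _) ?_
    rw [hqdef, ← Real.exp_add]; simp
  have h1le : 1 ≤ 2*ε + 4*ε*ω := aux_omega_lb ε ω q hε hω hq0 hqbnd heq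
  have hωlb : 1/(2*ε) ≤ 1 + 2*ω := by
    rw [div_le_iff₀ (by positivity)]
    nlinarith [h1le, hω, hε]
  -- q is small: q ≤ 48 ε²
  have hqsmall : q ≤ 48 * ε^2 := by
    have h1 : q ≤ Real.exp (1 - 1/(2*ε)) := by
      rw [hqdef]
      apply Real.exp_le_exp.2
      linarith
    have h2 : Real.exp (1 - 1/(2*ε)) = Real.exp 1 * Real.exp (-(1/(2*ε))) := by
      rw [← Real.exp_add]; ring_nf
    have h3 : Real.exp (-(1/(2*ε))) ≤ 16 * ε^2 := aux_exp_small ε hε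
    have h7 : Real.exp 1 ≤ 3 := by
      have := Real.exp_one_lt_d9; linarith
    calc q ≤ Real.exp 1 * Real.exp (-(1/(2*ε))) := by rw [← h2]; exact h1
    _ ≤ 3 * (16*ε^2) :=
        mul_le_mul h7 h3 (le_of_lt (Real.exp_pos _)) (by norm_num)
    _ = 48 * ε^2 := by ring
  have hε4 : ε ≤ 1/10000 := le_of_lt hε0
  have hqeps : q ≤ ε/100 := aux_qeps ε q hε hε4 hqsmall
  -- refined bound: q ≤ 2 exp(-1/ε)
  have hqexp : q ≤ 2 * Real.exp (-(1/ε)) := by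
    have h2ωlb : (1 - 2*q)/ε ≤ 2*ω := by
      rw [div_le_iff₀ hε]
      exact aux_2omega ε ω q hq0 heq
    have h1 : q ≤ Real.exp (2*q/ε - 1/ε) := by
      rw [hqdef]
      apply Real.exp_le_exp.2
      have hh : (1 - 2*q)/ε = 1/ε - 2*q/ε := by ring
      rw [hh] at h2ωlb
      linarith
    have h2 : Real.exp (2*q/ε - 1/ε) = Real.exp (2*q/ε) * Real.exp (-(1/ε)) := by
      rw [← Real.exp_add]; ring_nf
    have h3 : Real.exp (2*q/ε) ≤ 2 := by
      have hle : 2*q/ε ≤ Real.log 2 := by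
        have hh : 2*q/ε ≤ 2/100 := by
          rw [div_le_iff₀ hε]
          linarith [hqeps]
        linarith [Real.log_two_gt_d9]
      calc Real.exp (2*q/ε) ≤ Real.exp (Real.log 2) := Real.exp_le_exp.2 hle
      _ = 2 := Real.exp_log (by norm_num)
    rw [h2] at h1
    calc q ≤ Real.exp (2*q/ε) * Real.exp (-(1/ε)) := h1
    _ ≤ 2 * Real.exp (-(1/ε)) :=
        mul_le_mul_of_nonneg_right h3 (le_of_lt (Real.exp_pos _))
  -- u := q/ε
  set u : ℝ := q/ε with hudef
  have hu0 : 0 < u := by positivity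
  have hu100 : u ≤ 1/100 := by
    rw [hudef, div_le_iff₀ hε]; linarith [hqeps]
  have hqu : q = u * ε := by rw [hudef]; field_simp
  have hqleu : q ≤ u/10000 := aux_qleu ε q u hu0 hε4 hqu
  -- E bounds
  set E : ℝ := Real.exp (ω - 1/(2*ε)) with hEdef
  have hωval : ω = (1 - q)/(2*ε*(1+q)) := by
    rw [eq_div_iff (by positivity)]
    linarith [heq]
  have hEform : ω - 1/(2*ε) = -(q/(ε*(1+q))) := by
    rw [hωval]
    field_simp
    ring
  have hE1 : E ≤ 1 := by
    rw [hEdef, hEform]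
    have hx : (0:ℝ) ≤ q/(ε*(1+q)) := by positivity
    calc Real.exp (-(q / (ε * (1 + q)))) ≤ Real.exp 0 := Real.exp_le_exp.2 (by linarith)
    _ = 1 := Real.exp_zero
  have hE2 : 1 - u ≤ E := by
    have h1 : 1 - q/(ε*(1+q)) ≤ E := by
      rw [hEdef, hEform]
      linarith [Real.add_one_le_exp (-(q/(ε*(1+q))))]
    have h2 : q/(ε*(1+q)) ≤ u := by
      rw [hudef]
      apply div_le_div_of_nonneg_left (le_of_lt hq0) hε
      linarith [mul_pos hε hq0]
    linarith
  have hEpos : 0 < E := Real.exp_pos _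
  -- denominators
  have hDd : (0:ℝ) < (1+q)^2 - 2*u := by
    linarith [sq_nonneg q, hq0, hu100]
  have hD : (0:ℝ) < ε*(1+q)^2 - 2*q := by
    have h := mul_pos hε hDd
    have h2 : ε * u = q := by rw [hqu]; ring
    nlinarith [h, h2]
  -- the expression identity
  have hq4 : Real.exp (-(4*ω)) = q^2 := by
    rw [hqdef, sq, ← Real.exp_add]; ring_nf
  have hdiv : (1 - q^2)/(2*ω) = ε*(1+q)^2 := by
    rw [div_eq_iff (by positivity : (2*ω) ≠ 0)]
    linear_combination (-(1:ℝ)-q) * heq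
  have hsum : ω + 1/(2*ε) = 1/(ε*(1+q)) := by
    rw [hωval]
    field_simp
    ring
  have hXeq : ((1 - Real.exp (-(4 * ω))) / (2 * ω) - 2 * q)⁻¹ *
      (1 - q) ^ 2 * (ω + 1 / (2 * ε))⁻¹ * E
      = (1-q)^2*(1+q)*E / ((1+q)^2 - 2*u) := by
    rw [hq4]
    rw [show (1 - q ^ 2) / (2 * ω) = ε*(1+q)^2 from hdiv]
    rw [hsum]
    rw [inv_div, div_one]
    have hεDd : ε * ((1+q)^2 - 2*u) = ε*(1+q)^2 - 2*q := by rw [hqu]; ring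
    have hcanc : (ε*(1+q)^2 - 2*q)⁻¹ * (ε * ((1+q)^2 - 2*u)) = 1 := by
      rw [hεDd]; exact inv_mul_cancel₀ (ne_of_gt hD)
    rw [eq_div_iff (ne_of_gt hDd)]
    linear_combination ((1-q)^2*(1+q)*E) * hcanc
  rw [hXeq]
  -- core bound : |N/Dd - 1| ≤ 8u
  have h1 : (1-q)^2*(1+q)*E ≤ (1 + 8*u)*((1+q)^2 - 2*u) :=
    aux_upper q u E hq0 hq1 hu0 hu100 hE1 hEpos
  have h2 : (1 - 8*u)*((1+q)^2 - 2*u) ≤ (1-q)^2*(1+q)*E :=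
    aux_lower q u E hq0 hq1 hu0 hu100 hqleu hE2
  have habs : |(1-q)^2*(1+q)*E / ((1+q)^2 - 2*u) - 1| ≤ 8*u := by
    rw [abs_le]
    constructor
    · have := (le_div_iff₀ hDd).2 h2
      linarith
    · have := (div_le_iff₀ hDd).2 h1
      linarith
  have hfin : 8*u ≤ 100/ε * Real.exp (-1/ε) := by
    have hexp : Real.exp (-1/ε) = Real.exp (-(1/ε)) := by rw [neg_div]
    rw [hexp]
    have e1 : 8*u = (8*q)/ε := by rw [hudef]; ring
    have e2 : 100/ε * Real.exp (-(1/ε)) = (100 * Real.exp (-(1/ε)))/ε := by ring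
    rw [e1, e2]
    exact (div_le_div_iff_of_pos_right hε).2 (by linarith [hqexp, (Real.exp_pos (-(1/ε))).le])

  linarith [habs, hfin]
end

section
/- Let u : [0,1] → ℝ be twice continuously differentiable with u(1) = 0 and u(0)/(2ε) + u′(0) = 0, where 0 < ε < 1/2. If −u″ = λ u for some λ ∈ ℝ and u is not identically zero, then either λ = −ω² for the unique positive root ω of tanh ω = 2εω (a positive eigenvalue ω² of d²/dx²), or λ = ω_n² > 0 where ω_n solves tan ω_n = 2εω_n; in particular, d²/dx² with these boundary conditions has exactly one positive eigenvalue, namely ω² with tanh ω = 2εω. -/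
open Set

lemma rep_lemma (lam : ℝ) (u c cd s sd : ℝ → ℝ) (hu : ContDiff ℝ 2 u)
    (hc : ∀ x, HasDerivAt c (cd x) x) (hcd : ∀ x, HasDerivAt cd (-lam * c x) x)
    (hs : ∀ x, HasDerivAt s (sd x) x) (hsd : ∀ x, HasDerivAt sd (-lam * s x) x)
    (hW : ∀ x, c x * sd x - cd x * s x = 1)
    (hc0 : c 0 = 1) (hcd0 : cd 0 = 0) (hs0 : s 0 = 0) (hsd0 : sd 0 = 1)
    (heig : ∀ x ∈ Set.Icc (0:ℝ) 1, -(deriv (deriv u) x) = lam * u x) :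
    ∀ x ∈ Set.Icc (0:ℝ) 1, u x = u 0 * c x + deriv u 0 * s x := by
  have hu1 : ContDiff ℝ 1 (deriv u) := by
    have h2 : ContDiff ℝ ((1:WithTop ℕ∞)+1) u := by
      exact hu.of_le (by norm_num)
    exact (contDiff_succ_iff_deriv.mp h2).2.2
  have hud : ∀ x, HasDerivAt u (deriv u x) x := fun x =>
    ((hu.differentiable two_ne_zero) x).hasDerivAt
  have hud2 : ∀ x, HasDerivAt (deriv u) (deriv (deriv u) x) x := fun x =>
    ((hu1.differentiable one_ne_zero) x).hasDerivAt
  have hccont : Continuous c := continuous_iff_continuousAt.mpr fun x => ((hc x).differentiableAt.continuousAt)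
  have hcdcont : Continuous cd := continuous_iff_continuousAt.mpr fun x => ((hcd x).differentiableAt.continuousAt)
  have hscont : Continuous s := continuous_iff_continuousAt.mpr fun x => ((hs x).differentiableAt.continuousAt)
  have hsdcont : Continuous sd := continuous_iff_continuousAt.mpr fun x => ((hsd x).differentiableAt.continuousAt)
  set A : ℝ → ℝ := fun x => u x * sd x - deriv u x * s x with hA
  set B : ℝ → ℝ := fun x => deriv u x * c x - u x * cd x with hB
  have hAcont : ContinuousOn A (Icc 0 1) :=
    ((hu.continuous.mul hsdcont).sub (hu1.continuous.mul hscont)).continuousOn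
  have hBcont : ContinuousOn B (Icc 0 1) :=
    ((hu1.continuous.mul hccont).sub (hu.continuous.mul hcdcont)).continuousOn
  have hAderiv : ∀ x ∈ Ico (0:ℝ) 1, HasDerivWithinAt A 0 (Ici x) x := by
    intro x hx
    have he := heig x (Ico_subset_Icc_self hx)
    have : HasDerivAt A (deriv u x * sd x + u x * (-lam * s x) -
        (deriv (deriv u) x * s x + deriv u x * sd x)) x :=
      ((hud x).mul (hsd x)).sub ((hud2 x).mul (hs x))
    have h0 : deriv u x * sd x + u x * (-lam * s x) -
        (deriv (deriv u) x * s x + deriv u x * sd x) = 0 := by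
      have hdd : deriv (deriv u) x = -(lam * u x) := by linarith
      rw [hdd]; ring
    rw [h0] at this
    exact this.hasDerivWithinAt
  have hBderiv : ∀ x ∈ Ico (0:ℝ) 1, HasDerivWithinAt B 0 (Ici x) x := by
    intro x hx
    have he := heig x (Ico_subset_Icc_self hx)
    have : HasDerivAt B (deriv (deriv u) x * c x + deriv u x * cd x -
        (deriv u x * cd x + u x * (-lam * c x))) x :=
      ((hud2 x).mul (hc x)).sub ((hud x).mul (hcd x))
    have h0 : deriv (deriv u) x * c x + deriv u x * cd x -
        (deriv u x * cd x + u x * (-lam * c x)) = 0 := by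
      have hdd : deriv (deriv u) x = -(lam * u x) := by linarith
      rw [hdd]; ring
    rw [h0] at this
    exact this.hasDerivWithinAt
  have hAconst := constant_of_has_deriv_right_zero hAcont hAderiv
  have hBconst := constant_of_has_deriv_right_zero hBcont hBderiv
  intro x hx
  have hA0 : A x = u 0 := by
    have := hAconst x hx
    simp only [hA] at this ⊢
    rw [this, hs0, hsd0]; ring
  have hB0 : B x = deriv u 0 := by
    have := hBconst x hx
    simp only [hB] at this ⊢
    rw [this, hc0, hcd0]; ring
  have key : u x * (c x * sd x - cd x * s x) = A x * c x + B x * s x := by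
    simp only [hA, hB]; ring
  rw [hW x, mul_one, hA0, hB0] at key
  exact key

lemma bc_lemma (ε : ℝ) (hε : 0 < ε) (u : ℝ → ℝ) (hbc1 : u 1 = 0)
    (hbc0 : u 0 / (2 * ε) + deriv u 0 = 0)
    (hne : ∃ x ∈ Set.Icc (0:ℝ) 1, u x ≠ 0) (c s : ℝ → ℝ)
    (rep : ∀ x ∈ Set.Icc (0:ℝ) 1, u x = u 0 * c x + deriv u 0 * s x) :
    s 1 = 2 * ε * c 1 := by
  have hεne : (2*ε) ≠ 0 := by positivity
  have hu0 : u 0 = -(2*ε) * deriv u 0 := by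
    field_simp at hbc0; linarith
  have hd0 : deriv u 0 ≠ 0 := by
    intro h
    obtain ⟨x, hx, hux⟩ := hne
    apply hux
    rw [rep x hx, hu0, h]; ring
  have h1 := rep 1 (by norm_num : (1:ℝ) ∈ Set.Icc (0:ℝ) 1)
  rw [hbc1, hu0] at h1
  have h2 : deriv u 0 * (s 1 - 2 * ε * c 1) = 0 := by linear_combination -h1
  have h3 := (mul_eq_zero.mp h2).resolve_left hd0
  linarith

theorem stmt_15 (ε : ℝ) (hε : 0 < ε) (hε' : ε < 1 / 2)
    (u : ℝ → ℝ) (hu : ContDiff ℝ 2 u)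
    (hbc1 : u 1 = 0) (hbc0 : u 0 / (2 * ε) + deriv u 0 = 0)
    (lam : ℝ)
    (heig : ∀ x ∈ Set.Icc (0:ℝ) 1, -(deriv (deriv u) x) = lam * u x)
    (hne : ∃ x ∈ Set.Icc (0:ℝ) 1, u x ≠ 0) :
    (∃ ω : ℝ, 0 < ω ∧ Real.tanh ω = 2 * ε * ω ∧ lam = -(ω ^ 2)) ∨
    (∃ ωn : ℝ, 0 < ωn ∧ Real.tan ωn = 2 * ε * ωn ∧ lam = ωn ^ 2) := by
  rcases lt_trichotomy lam 0 with hlt | heq | hgt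
  · -- lam < 0 : hyperbolic case
    left
    set ω := Real.sqrt (-lam) with hωdef
    have hω : 0 < ω := Real.sqrt_pos.mpr (by linarith)
    have hω2 : ω ^ 2 = -lam := Real.sq_sqrt (by linarith)
    have hωne : ω ≠ 0 := ne_of_gt hω
    have hlin : ∀ x : ℝ, HasDerivAt (fun y => ω * y) ω x := fun x => by
      simpa using (hasDerivAt_id x).const_mul ω
    have hc : ∀ x, HasDerivAt (fun x => Real.cosh (ω*x)) (Real.sinh (ω*x) * ω) x :=
      fun x => (hlin x).cosh
    have hcd : ∀ x, HasDerivAt (fun x => Real.sinh (ω*x) * ω)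
        (-lam * Real.cosh (ω*x)) x := by
      intro x
      have h := ((hlin x).sinh).mul_const ω
      have he : Real.cosh (ω*x) * ω * ω = -lam * Real.cosh (ω*x) := by
        rw [← hω2]; ring
      rwa [he] at h
    have hs : ∀ x, HasDerivAt (fun x => Real.sinh (ω*x) * (1/ω))
        (Real.cosh (ω*x)) x := by
      intro x
      have h := ((hlin x).sinh).mul_const (1/ω)
      have he : Real.cosh (ω*x) * ω * (1/ω) = Real.cosh (ω*x) := by
        field_simp
      rwa [he] at h
    have hsd : ∀ x, HasDerivAt (fun x => Real.cosh (ω*x))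
        (-lam * (Real.sinh (ω*x) * (1/ω))) x := by
      intro x
      have h := (hlin x).cosh
      have he : Real.sinh (ω*x) * ω = -lam * (Real.sinh (ω*x) * (1/ω)) := by
        rw [← hω2]; field_simp
      rwa [he] at h
    have hW : ∀ x : ℝ, Real.cosh (ω*x) * Real.cosh (ω*x)
        - (Real.sinh (ω*x) * ω) * (Real.sinh (ω*x) * (1/ω)) = 1 := by
      intro x
      have h := Real.cosh_sq_sub_sinh_sq (ω*x)
      field_simp
      nlinarith [h]
    have rep := rep_lemma lam u (fun x => Real.cosh (ω*x)) (fun x => Real.sinh (ω*x) * ω)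
      (fun x => Real.sinh (ω*x) * (1/ω)) (fun x => Real.cosh (ω*x)) hu
      hc hcd hs hsd hW (by simp) (by simp) (by simp) (by simp) heig
    have hbc := bc_lemma ε hε u hbc1 hbc0 hne _ _ rep
    simp only [mul_one] at hbc
    refine ⟨ω, hω, ?_, by linarith⟩
    rw [Real.tanh_eq_sinh_div_cosh]
    have hch : Real.cosh ω > 0 := Real.cosh_pos ω
    field_simp
    field_simp at hbc
    linarith
  · -- lam = 0
    exfalso
    subst heq
    have hc : ∀ x : ℝ, HasDerivAt (fun _ : ℝ => (1:ℝ)) (0:ℝ) x := fun x => hasDerivAt_const x 1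
    have hcd : ∀ x : ℝ, HasDerivAt (fun _ : ℝ => (0:ℝ)) (-(0:ℝ) * (1:ℝ)) x := fun x => by
      simpa using hasDerivAt_const x (0:ℝ)
    have hs : ∀ x : ℝ, HasDerivAt (fun y : ℝ => y) (1:ℝ) x := fun x => hasDerivAt_id x
    have hsd : ∀ x : ℝ, HasDerivAt (fun _ : ℝ => (1:ℝ)) (-(0:ℝ) * x) x := fun x => by
      simpa using hasDerivAt_const x (1:ℝ)
    have rep := rep_lemma 0 u (fun _ => 1) (fun _ => 0) (fun y => y) (fun _ => 1) hu
      hc hcd hs hsd (by intro x; ring) rfl rfl rfl rfl heig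
    have hbc := bc_lemma ε hε u hbc1 hbc0 hne _ _ rep
    simp at hbc
    linarith
  · -- lam > 0 : trig case
    right
    set ω := Real.sqrt lam with hωdef
    have hω : 0 < ω := Real.sqrt_pos.mpr hgt
    have hω2 : ω ^ 2 = lam := Real.sq_sqrt (le_of_lt hgt)
    have hωne : ω ≠ 0 := ne_of_gt hω
    have hlin : ∀ x : ℝ, HasDerivAt (fun y => ω * y) ω x := fun x => by
      simpa using (hasDerivAt_id x).const_mul ω
    have hc : ∀ x, HasDerivAt (fun x => Real.cos (ω*x)) (-Real.sin (ω*x) * ω) x :=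
      fun x => (hlin x).cos
    have hcd : ∀ x, HasDerivAt (fun x => -Real.sin (ω*x) * ω)
        (-lam * Real.cos (ω*x)) x := by
      intro x
      have h := (((hlin x).sin).mul_const ω).neg
      have he : -(Real.cos (ω*x) * ω * ω) = -lam * Real.cos (ω*x) := by
        rw [← hω2]; ring
      have h2 : HasDerivAt (fun x => -(Real.sin (ω*x) * ω)) (-lam * Real.cos (ω*x)) x := by
        rwa [he] at h
      convert h2 using 2 with y
      ring
    have hs : ∀ x, HasDerivAt (fun x => Real.sin (ω*x) * (1/ω))
        (Real.cos (ω*x)) x := by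
      intro x
      have h := ((hlin x).sin).mul_const (1/ω)
      have he : Real.cos (ω*x) * ω * (1/ω) = Real.cos (ω*x) := by field_simp
      rwa [he] at h
    have hsd : ∀ x, HasDerivAt (fun x => Real.cos (ω*x))
        (-lam * (Real.sin (ω*x) * (1/ω))) x := by
      intro x
      have h := (hlin x).cos
      have he : -Real.sin (ω*x) * ω = -lam * (Real.sin (ω*x) * (1/ω)) := by
        rw [← hω2]; field_simp
      rwa [he] at h
    have hW : ∀ x : ℝ, Real.cos (ω*x) * Real.cos (ω*x)
        - (-Real.sin (ω*x) * ω) * (Real.sin (ω*x) * (1/ω)) = 1 := by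
      intro x
      have h := Real.sin_sq_add_cos_sq (ω*x)
      field_simp
      nlinarith [h]
    have rep := rep_lemma lam u (fun x => Real.cos (ω*x)) (fun x => -Real.sin (ω*x) * ω)
      (fun x => Real.sin (ω*x) * (1/ω)) (fun x => Real.cos (ω*x)) hu
      hc hcd hs hsd hW (by simp) (by simp) (by simp) (by simp) heig
    have hbc := bc_lemma ε hε u hbc1 hbc0 hne _ _ rep
    simp only [mul_one] at hbc
    have hcos : Real.cos ω ≠ 0 := by
      intro h0
      have hsin : Real.sin ω = 0 := by
        have : Real.sin ω * (1/ω) = 0 := by rw [hbc, h0]; ring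
        rcases mul_eq_zero.mp this with h | h
        · exact h
        · exact absurd h (by positivity)
      have := Real.sin_sq_add_cos_sq ω
      rw [hsin, h0] at this
      norm_num at this
    refine ⟨ω, hω, ?_, by linarith⟩
    rw [Real.tan_eq_sin_div_cos]
    field_simp
    field_simp at hbc
    linarith
end
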